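/- For a cellular automaton f with a quiescent state 0, the following are equivalent for any n ∈ N: (1) there exists a finite-support configuration x such that f^{-n}(x) contains a finite-support configuration and f^{-(n+1)}(x) = ∅; (2) there exists a configuration x with f^{-n}(x) ≠ ∅ and f^{-(n+1)}(x) = ∅; (3) there exists a finite pattern p with a configuration in f^{-n}([p]) but f^{-(n+1)}([p]) = ∅. -/

import Mathlib

abbrev Cell (d : ℕ) := Fin d → ℤ
abbrev Config (d : ℕ) (S : Type*) := Cell d → S

/-- The shift map `σ_v(x)_u = x_(v+u)`. -/
def shiftMap {d : ℕ} {S : Type*} (v : Cell d) (x : Config d S) : Config d S :=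
  fun u => x (v + u)

/-- A cellular automaton: continuous (product topology, `S` discrete) and shift-commuting. -/
def IsCA {d : ℕ} {S : Type*} [TopologicalSpace S] (f : Config d S → Config d S) : Prop :=
  Continuous f ∧ ∀ v : Cell d, f ∘ shiftMap v = shiftMap v ∘ f

/-- The cylinder of the pattern `p` restricted to domain `D`. -/
def cylinder {d : ℕ} {S : Type*} (D : Set (Cell d)) (p : Cell d → S) : Set (Config d S) :=
  {x | ∀ u ∈ D, x u = p u}


open TopologicalSpace Set

/-- Core: any open set in a product of discrete spaces contains a cylinder around each point. -/
lemma core {d : ℕ} {S : Type*} [TopologicalSpace S] [DiscreteTopology S]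
    {U : Set ((Fin d → ℤ) → S)} (hU : IsOpen U) {x : (Fin d → ℤ) → S} (hx : x ∈ U) :
    ∃ D : Finset (Fin d → ℤ), ∀ w, (∀ u ∈ D, w u = x u) → w ∈ U := by
  obtain ⟨v, ⟨V, F, -, rfl⟩, xV, hvU⟩ :=
    (isTopologicalBasis_pi fun _ : (Fin d → ℤ) => isTopologicalBasis_opens).exists_subset_of_mem_open hx hU
  refine ⟨F, fun w hw => hvU fun u hu => ?_⟩
  rw [hw u (by simpa using hu)]
  exact xV u hu


/-- finite dependence of a continuous map to a discrete space -/
lemma findep {d : ℕ} {S : Type*} [Fintype S] [TopologicalSpace S] [DiscreteTopology S]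
    {g : ((Fin d → ℤ) → S) → S} (hg : Continuous g) :
    ∃ D : Finset (Fin d → ℤ), ∀ x y, (∀ u ∈ D, x u = y u) → g x = g y := by
  have h1 : ∀ x : (Fin d → ℤ) → S, ∃ D : Finset (Fin d → ℤ),
      ∀ w, (∀ u ∈ D, w u = x u) → g w = g x := by
    intro x
    exact core (hg.isOpen_preimage {g x} (isOpen_discrete _)) (by simp)
  choose Dx hDx using h1
  have hcov : (Set.univ : Set ((Fin d → ℤ) → S)) ⊆
      ⋃ x, {w | ∀ u ∈ Dx x, w u = x u} := by
    intro x _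
    exact Set.mem_iUnion.2 ⟨x, fun u _ => rfl⟩
  obtain ⟨t, ht⟩ := IsCompact.elim_finite_subcover isCompact_univ
    (fun x => {w : (Fin d → ℤ) → S | ∀ u ∈ Dx x, w u = x u})
    (fun x => by
      have : {w : (Fin d → ℤ) → S | ∀ u ∈ Dx x, w u = x u}
          = Set.pi (Dx x : Set (Fin d → ℤ)) (fun u => {x u}) := by
        ext w; simp [Set.mem_pi]
      show IsOpen {w : (Fin d → ℤ) → S | ∀ u ∈ Dx x, w u = x u}
      rw [this]
      exact isOpen_set_pi (Dx x).finite_toSet fun u _ => isOpen_discrete _)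
    hcov
  refine ⟨t.biUnion Dx, fun x y hxy => ?_⟩
  obtain ⟨c, hct, hxc⟩ := Set.mem_iUnion₂.1 (ht (Set.mem_univ x))
  have hyc : ∀ u ∈ Dx c, y u = c u := fun u hu => by
    rw [← hxy u (Finset.mem_biUnion.2 ⟨c, hct, hu⟩)]; exact hxc u hu
  rw [hDx c x hxc, hDx c y hyc]

lemma iterCA {d : ℕ} {S : Type*} [TopologicalSpace S] {f : ((Fin d → ℤ) → S) → ((Fin d → ℤ) → S)}
    (hf : Continuous f ∧ ∀ v, f ∘ (fun x u => x (v + u)) = (fun x u => x (v + u)) ∘ f) (k : ℕ) :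
    Continuous f^[k] ∧ ∀ v, f^[k] ∘ (fun x u => x (v + u)) = (fun x u => x (v + u)) ∘ f^[k] := by
  induction k with
  | zero => exact ⟨continuous_id, fun v => rfl⟩
  | succ k ih =>
    refine ⟨?_, fun v => ?_⟩
    · rw [Function.iterate_succ]
      exact ih.1.comp hf.1
    · rw [Function.iterate_succ, Function.comp_assoc, hf.2 v, ← Function.comp_assoc,
        ih.2 v, Function.comp_assoc]

lemma locality {d : ℕ} {S : Type*} [Fintype S] [TopologicalSpace S] [DiscreteTopology S]
    {g : ((Fin d → ℤ) → S) → ((Fin d → ℤ) → S)}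
    (hg : Continuous g ∧ ∀ v, g ∘ (fun x u => x (v + u)) = (fun x u => x (v + u)) ∘ g) :
    ∃ M : Finset (Fin d → ℤ), ∀ x y (u : Fin d → ℤ),
      (∀ v ∈ M, x (u + v) = y (u + v)) → g x u = g y u := by
  obtain ⟨M, hM⟩ := findep (g := fun x => g x 0) ((continuous_apply (0 : Fin d → ℤ)).comp hg.1)
  refine ⟨M, fun x y u h => ?_⟩
  have hx : g x u = g (fun w => x (u + w)) 0 := by
    have := congrFun (congrFun (hg.2 u) x) 0
    simp only [Function.comp_apply, add_zero] at this
    exact this.symm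
  have hy : g y u = g (fun w => y (u + w)) 0 := by
    have := congrFun (congrFun (hg.2 u) y) 0
    simp only [Function.comp_apply, add_zero] at this
    exact this.symm
  rw [hx, hy]
  exact hM _ _ fun v hv => h v hv

lemma quiesc {d : ℕ} {S : Type*} {f : ((Fin d → ℤ) → S) → ((Fin d → ℤ) → S)} {z : S}
    (hz : f (fun _ => z) = fun _ => z) (k : ℕ) : f^[k] (fun _ => z) = fun _ => z := by
  induction k with
  | zero => rfl
  | succ k ih => rw [Function.iterate_succ_apply, hz, ih]

lemma suppFin {d : ℕ} {S : Type*} {g : ((Fin d → ℤ) → S) → ((Fin d → ℤ) → S)} {z : S}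
    {M : Finset (Fin d → ℤ)}
    (hloc : ∀ x y (u : Fin d → ℤ), (∀ v ∈ M, x (u + v) = y (u + v)) → g x u = g y u)
    (hq : g (fun _ => z) = fun _ => z) {F : Finset (Fin d → ℤ)} {y : (Fin d → ℤ) → S}
    (hy : ∀ u, u ∉ F → y u = z) : {u | g y u ≠ z}.Finite := by
  have hsub : {u | g y u ≠ z} ⊆ ⋃ v ∈ M, (· + v) ⁻¹' (F : Set (Fin d → ℤ)) := by
    intro u hu
    by_contra hnot
    apply hu
    have hz' : ∀ v ∈ M, u + v ∉ F := fun v hv hF => hnot (Set.mem_biUnion hv hF)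
    have : g y u = g (fun _ => z) u := hloc _ _ u fun v hv => hy _ (hz' v hv)
    rw [this, hq]
  exact Set.Finite.subset (Set.Finite.biUnion M.finite_toSet fun v _ =>
    Set.Finite.preimage (Function.Injective.injOn (add_left_injective v)) F.finite_toSet) hsub

lemma sep {d : ℕ} {S : Type*} [Fintype S] [TopologicalSpace S] [DiscreteTopology S]
    {g : ((Fin d → ℤ) → S) → ((Fin d → ℤ) → S)} (hg : Continuous g)
    {x0 : (Fin d → ℤ) → S} (h : ¬∃ y, g y = x0) :
    ∃ D : Finset (Fin d → ℤ), ∀ w, (∀ u ∈ D, w u = x0 u) → ¬∃ y, g y = w := by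
  have hcl : IsClosed (Set.range g) := (isCompact_range hg).isClosed
  obtain ⟨D, hD⟩ := core hcl.isOpen_compl (by simpa [Set.mem_range] using h)
  exact ⟨D, fun w hw hex => hD w hw (Set.mem_range.2 hex)⟩

/-- For a CA with quiescent state `z`, the following are equivalent: (1) some
finite-support configuration has a finite-support `n`-th preimage but no `(n+1)`-st
preimage; (2) some configuration has an `n`-th preimage but no `(n+1)`-st preimage;
(3) some finite pattern has an `n`-th preimage but no `(n+1)`-st preimage. -/
theorem stmt7 {d : ℕ} {S : Type*} [Fintype S] [TopologicalSpace S] [DiscreteTopology S]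
    (f : Config d S → Config d S) (hf : IsCA f) (z : S)
    (hz : f (fun _ => z) = fun _ => z) (n : ℕ) :
    ((∃ x : Config d S, {u | x u ≠ z}.Finite ∧
        (∃ y : Config d S, {u | y u ≠ z}.Finite ∧ f^[n] y = x) ∧ ¬ ∃ y, f^[n+1] y = x) ↔
      (∃ x : Config d S, (∃ y, f^[n] y = x) ∧ ¬ ∃ y, f^[n+1] y = x)) ∧
    ((∃ x : Config d S, (∃ y, f^[n] y = x) ∧ ¬ ∃ y, f^[n+1] y = x) ↔
      (∃ D : Set (Cell d), D.Finite ∧ ∃ p : Cell d → S,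
        (∃ y, f^[n] y ∈ cylinder D p) ∧ ¬ ∃ y, f^[n+1] y ∈ cylinder D p)) := by
  have hfCA : Continuous f ∧ ∀ v : Cell d, f ∘ (fun x u => x (v + u)) = (fun x u => x (v + u)) ∘ f :=
    ⟨hf.1, hf.2⟩
  have hitn := iterCA hfCA n
  have hitn1 := iterCA hfCA (n + 1)
  constructor
  · constructor
    · rintro ⟨x, _, ⟨y, _, hy⟩, hno⟩
      exact ⟨x, ⟨y, hy⟩, hno⟩
    · rintro ⟨x0, ⟨y0, hy0⟩, hno⟩
      obtain ⟨D, hD⟩ := sep hitn1.1 hno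
      obtain ⟨M, hM⟩ := locality hitn
      set E : Finset (Cell d) := (D ×ˢ M).image fun p => p.1 + p.2 with hE
      set y' : Config d S := fun u => if u ∈ E then y0 u else z with hy'
      have hy'z : ∀ u, u ∉ E → y' u = z := fun u hu => by simp [hy', hu]
      have hy'fin : {u | y' u ≠ z}.Finite := by
        refine Set.Finite.subset E.finite_toSet fun u hu => ?_
        by_contra hne
        exact hu (hy'z u hne)
      have hx'fin : {u | f^[n] y' u ≠ z}.Finite := suppFin hM (quiesc hz n) hy'z
      have hmatch : ∀ u ∈ D, f^[n] y' u = x0 u := by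
        intro u hu
        have : f^[n] y' u = f^[n] y0 u := by
          refine hM _ _ u fun v hv => ?_
          have hmem : u + v ∈ E := Finset.mem_image.2 ⟨(u, v), Finset.mem_product.2 ⟨hu, hv⟩, rfl⟩
          simp [hy', hmem]
        rw [this, hy0]
      exact ⟨f^[n] y', hx'fin, ⟨y', hy'fin, rfl⟩, hD _ hmatch⟩
  · constructor
    · rintro ⟨x0, ⟨y0, hy0⟩, hno⟩
      obtain ⟨D, hD⟩ := sep hitn1.1 hno
      refine ⟨(D : Set (Cell d)), D.finite_toSet, x0, ⟨y0, fun u hu => by rw [hy0]⟩, ?_⟩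
      rintro ⟨y, hy⟩
      exact hD (f^[n+1] y) (fun u hu => hy u hu) ⟨y, rfl⟩
    · rintro ⟨D, _, p, ⟨y, hy⟩, hno⟩
      refine ⟨f^[n] y, ⟨y, rfl⟩, ?_⟩
      rintro ⟨y', hy'⟩
      exact hno ⟨y', by rw [hy']; exact hy⟩
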